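/- Let q ≥ 2 and n ≥ 2 be integers, and let G be a finite simple graph that is strongly regular with parameters (v, k, λ, μ) where v = (q^{2n}−1)/(q−1), k = q(q^{2n−2}−1)/(q−1), λ = (q^{2n−2}−1)/(q−1) − 2, and μ = (q^{2n−2}−1)/(q−1) (in particular, the symplectic polar graph Sp(2n,q) for q a prime power). Then θ(Ḡ) = (q^n−1)/(q−1) and θ(G) = q^n + 1, where Ḡ is the complement of G. -/

import Mathlib

open scoped Classical
open Matrix

set_option linter.unusedSectionVars false

section ThetaAux

variable {V : Type*} [Fintype V] [DecidableEq V]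

noncomputable def Jmat (V : Type*) [Fintype V] : Matrix V V ℝ := Matrix.of fun _ _ => 1

lemma Jmat_apply (i j : V) : Jmat V i j = 1 := rfl

lemma Jmat_transpose : (Jmat V)ᵀ = Jmat V := rfl

lemma Jmat_isHermitian : (Jmat V).IsHermitian :=
  Matrix.ext fun i j => by simp [Matrix.conjTranspose_apply, Jmat]

lemma herm_smul {M : Matrix V V ℝ} (h : M.IsHermitian) (c : ℝ) : (c • M).IsHermitian := by
  have : (c • M)ᴴ = star c • Mᴴ := Matrix.conjTranspose_smul c M
  rw [Matrix.IsHermitian, this, star_trivial, h.eq]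

lemma Jmat_posSemidef : (Jmat V).PosSemidef := by
  refine Matrix.PosSemidef.of_dotProduct_mulVec_nonneg Jmat_isHermitian fun x => ?_
  have : star x ⬝ᵥ (Jmat V *ᵥ x) = (∑ i, x i) * (∑ i, x i) := by
    simp [dotProduct, Matrix.mulVec, Jmat, Finset.sum_mul, Pi.star_apply, star_trivial]
  rw [this]
  exact mul_self_nonneg _

lemma psd_trace_nonneg {M : Matrix V V ℝ} (h : M.PosSemidef) : 0 ≤ M.trace := by
  refine Finset.sum_nonneg fun i _ => ?_
  have := h.dotProduct_mulVec_nonneg (Pi.single i 1)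
  simpa [dotProduct, Matrix.mulVec, Pi.single_apply, Pi.star_apply, star_trivial] using this

open scoped MatrixOrder in
lemma psd_trace_mul_nonneg {B T : Matrix V V ℝ} (hB : B.PosSemidef) (hT : T.PosSemidef) :
    0 ≤ (B * T).trace := by
  obtain ⟨C, rfl⟩ := CStarAlgebra.nonneg_iff_eq_star_mul_self.mp hT.nonneg
  rw [← Matrix.mul_assoc, Matrix.trace_mul_cycle]
  exact psd_trace_nonneg (hB.mul_mul_conjTranspose_same C)

lemma psd_of_mul_self {T : Matrix V V ℝ} {γ : ℝ} (hH : T.IsHermitian) (hγ : 0 < γ)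
    (h : T * T = γ • T) : T.PosSemidef := by
  refine Matrix.PosSemidef.of_dotProduct_mulVec_nonneg hH fun x => ?_
  have hsymm : Tᵀ = T := by
    rw [← Matrix.conjTranspose_eq_transpose_of_trivial]; exact hH
  have hself : 0 ≤ (T *ᵥ x) ⬝ᵥ (T *ᵥ x) := Finset.sum_nonneg fun i _ => mul_self_nonneg _
  have key : γ * (x ⬝ᵥ T *ᵥ x) = (T *ᵥ x) ⬝ᵥ (T *ᵥ x) := by
    calc γ * (x ⬝ᵥ T *ᵥ x) = x ⬝ᵥ (γ • T) *ᵥ x := by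
          rw [Matrix.smul_mulVec, dotProduct_smul, smul_eq_mul]
      _ = x ⬝ᵥ (T * T) *ᵥ x := by rw [h]
      _ = x ⬝ᵥ T *ᵥ (T *ᵥ x) := by rw [← Matrix.mulVec_mulVec]
      _ = (x ᵥ* T) ⬝ᵥ (T *ᵥ x) := Matrix.dotProduct_mulVec _ _ _
      _ = (T *ᵥ x) ⬝ᵥ (T *ᵥ x) := by
          have hvm : x ᵥ* T = T *ᵥ x := by
            conv_lhs => rw [← hsymm]
            rw [Matrix.vecMul_transpose]
          rw [hvm]
  have hstar : star x ⬝ᵥ T *ᵥ x = x ⬝ᵥ T *ᵥ x := by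
    simp [dotProduct, Pi.star_apply, star_trivial]
  rw [hstar]
  nlinarith [key, hself]

lemma psd_smul {M : Matrix V V ℝ} {c : ℝ} (hc : 0 ≤ c) (hM : M.PosSemidef) :
    (c • M).PosSemidef := by
  refine Matrix.PosSemidef.of_dotProduct_mulVec_nonneg (herm_smul hM.1 c) fun x => ?_
  rw [Matrix.smul_mulVec, dotProduct_smul, smul_eq_mul]
  exact mul_nonneg hc (hM.dotProduct_mulVec_nonneg x)

lemma sum_eq_trace_mul_J (M : Matrix V V ℝ) :
    ∑ i, ∑ j, M i j = (M * Jmat V).trace := by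
  simp [Matrix.trace, Matrix.diag, Matrix.mul_apply, Jmat]

end ThetaAux
noncomputable def lovaszTheta {V : Type*} [Fintype V] (G : SimpleGraph V) : ℝ :=
  sSup { x : ℝ | ∃ B : Matrix V V ℝ, B.PosSemidef ∧ B.trace = 1 ∧
    (∀ i j, G.Adj i j → B i j = 0) ∧ x = ∑ i, ∑ j, B i j }

section ThetaEq

variable {V : Type*} [Fintype V] [DecidableEq V]

lemma theta_ub (H : SimpleGraph V) [DecidableRel H.Adj] {θ c : ℝ} {T : Matrix V V ℝ}
    (hT : T.PosSemidef) (hTeq : T = θ • (1 : Matrix V V ℝ) + c • H.adjMatrix ℝ - Jmat V) :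
    ∀ x ∈ { x : ℝ | ∃ B : Matrix V V ℝ, B.PosSemidef ∧ B.trace = 1 ∧
      (∀ i j, H.Adj i j → B i j = 0) ∧ x = ∑ i, ∑ j, B i j }, x ≤ θ := by
  rintro x ⟨B, hB, htr, hz, rfl⟩
  have hadj : (B * H.adjMatrix ℝ).trace = 0 := by
    simp only [Matrix.trace, Matrix.diag, Matrix.mul_apply]
    refine Finset.sum_eq_zero fun i _ => Finset.sum_eq_zero fun l _ => ?_
    by_cases hil : H.Adj i l
    · rw [hz i l hil, zero_mul]
    · rw [SimpleGraph.adjMatrix_apply, if_neg (fun hh => hil hh.symm), mul_zero]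
  have hJ : Jmat V = θ • (1 : Matrix V V ℝ) + c • H.adjMatrix ℝ - T := by
    rw [hTeq]; abel
  have expand : (B * Jmat V).trace = θ * B.trace + c * (B * H.adjMatrix ℝ).trace - (B * T).trace := by
    rw [hJ, Matrix.mul_sub, Matrix.mul_add, Matrix.trace_sub, Matrix.trace_add,
      mul_smul_comm, mul_smul_comm, Matrix.trace_smul, Matrix.trace_smul,
      Matrix.mul_one, smul_eq_mul, smul_eq_mul]
  have := psd_trace_mul_nonneg hB hT
  rw [sum_eq_trace_mul_J, expand, htr, hadj]
  linarith

lemma theta_eq (H : SimpleGraph V) [DecidableRel H.Adj] {θ c : ℝ} {B T : Matrix V V ℝ}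
    (hB : B.PosSemidef) (htr : B.trace = 1) (hz : ∀ i j, H.Adj i j → B i j = 0)
    (hsum : ∑ i, ∑ j, B i j = θ)
    (hT : T.PosSemidef) (hTeq : T = θ • (1 : Matrix V V ℝ) + c • H.adjMatrix ℝ - Jmat V) :
    lovaszTheta H = θ := by
  have hub := theta_ub H hT hTeq
  have hmem : θ ∈ { x : ℝ | ∃ B : Matrix V V ℝ, B.PosSemidef ∧ B.trace = 1 ∧
      (∀ i j, H.Adj i j → B i j = 0) ∧ x = ∑ i, ∑ j, B i j } := ⟨B, hB, htr, hz, hsum.symm⟩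
  exact le_antisymm (csSup_le ⟨θ, hmem⟩ hub) (le_csSup ⟨θ, hub⟩ hmem)

end ThetaEq
section Core

variable {V : Type*} [Fintype V] [DecidableEq V]

set_option maxHeartbeats 3200000 in
lemma theta_core (G : SimpleGraph V) [DecidableRel G.Adj] (p t : ℝ) (hp : 2 ≤ p) (ht : 2 ≤ t)
    (hcard : (Fintype.card V : ℝ) = (p^2*t^2 - 1)/(p - 1))
    (hA2 : G.adjMatrix ℝ * G.adjMatrix ℝ =
      ((t^2 - 1)/(p - 1)) • Jmat V + (-2 : ℝ) • G.adjMatrix ℝ + (t^2 - 1) • (1 : Matrix V V ℝ))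
    (hAJ : G.adjMatrix ℝ * Jmat V = (p * ((t^2 - 1)/(p - 1))) • Jmat V)
    (hJA : Jmat V * G.adjMatrix ℝ = (p * ((t^2 - 1)/(p - 1))) • Jmat V) :
    lovaszTheta Gᶜ = (p*t - 1)/(p - 1) ∧ lovaszTheta G = p*t + 1 := by
  set A := G.adjMatrix ℝ with hAdef
  set J := Jmat V with hJdef
  set m : ℝ := (t^2 - 1)/(p - 1) with hmdef
  set v : ℝ := (p^2*t^2 - 1)/(p - 1) with hvdef
  -- scalar facts
  have hp1 : (0:ℝ) < p - 1 := by linarith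
  have hp1' : p - 1 ≠ 0 := ne_of_gt hp1
  have ht0 : (0:ℝ) < t := by linarith
  have ht0' : t ≠ 0 := ne_of_gt ht0
  have ht1 : (0:ℝ) < t + 1 := by linarith
  have ht1' : t + 1 ≠ 0 := ne_of_gt ht1
  have hpt4 : (4:ℝ) ≤ p*t := by nlinarith
  have hvnum : (0:ℝ) < p^2*t^2 - 1 := by nlinarith
  have hvnum' : p^2*t^2 - 1 ≠ 0 := ne_of_gt hvnum
  have hvnum'' : t^2*p^2 - 1 ≠ 0 := by rw [mul_comm]; exact hvnum'
  have hv0 : (0:ℝ) < v := by rw [hvdef]; exact div_pos hvnum hp1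
  have hv0' : v ≠ 0 := ne_of_gt hv0
  have hpt : (0:ℝ) < p*t + 1 := by linarith
  have hpt' : p*t + 1 ≠ 0 := ne_of_gt hpt
  have hpt1 : (0:ℝ) < p*t - 1 := by linarith
  have hpt1' : p*t - 1 ≠ 0 := ne_of_gt hpt1
  have hpt1'' : t*p - 1 ≠ 0 := by rw [mul_comm]; exact hpt1'
  have hth' : (0:ℝ) < (p*t - 1)/(p - 1) := by apply div_pos _ hp1; linarith
  -- J*J
  have hJ2 : J * J = v • J := by
    ext i j
    simp only [hJdef, Matrix.mul_apply, Jmat_apply, mul_one, Matrix.smul_apply, smul_eq_mul,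
      Finset.sum_const, Finset.card_univ, nsmul_eq_mul]
    rw [← hcard]
  -- product formula
  have hL : ∀ a b c a' b' c' : ℝ,
      (a • (1 : Matrix V V ℝ) + b • A + c • J) * (a' • (1 : Matrix V V ℝ) + b' • A + c' • J) =
      (a*a' + b*b'*(t^2 - 1)) • (1 : Matrix V V ℝ) +
      (a*b' + a'*b - 2*(b*b')) • A +
      (b*b'*m + c*c'*v + a*c' + a'*c + (b*c' + b'*c)*(p*m)) • J := by
    intro a b c a' b' c'
    simp only [add_mul, mul_add, smul_mul_assoc, mul_smul_comm, one_mul, mul_one,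
      hA2, hAJ, hJA, hJ2, smul_add, smul_smul]
    module
  -- hermitian
  have hAH : A.IsHermitian := by
    rw [Matrix.IsHermitian, Matrix.conjTranspose_eq_transpose_of_trivial, hAdef,
      SimpleGraph.transpose_adjMatrix]
  have hherm : ∀ a b c : ℝ, (a • (1 : Matrix V V ℝ) + b • A + c • J).IsHermitian :=
    fun a b c => ((herm_smul Matrix.isHermitian_one a).add (herm_smul hAH b)).add
      (herm_smul Jmat_isHermitian c)
  -- traces
  have htrA : A.trace = 0 := by simp [hAdef]
  have htrJ : J.trace = v := by
    simp only [hJdef, Matrix.trace, Matrix.diag, Jmat_apply, Finset.sum_const,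
      Finset.card_univ, nsmul_eq_mul, mul_one]
    rw [← hcard]
  have htrL : ∀ a b c : ℝ, (a • (1 : Matrix V V ℝ) + b • A + c • J).trace = (a + c) * v := by
    intro a b c
    rw [Matrix.trace_add, Matrix.trace_add, Matrix.trace_smul, Matrix.trace_smul,
      Matrix.trace_smul, htrA, htrJ, Matrix.trace_one, hcard]
    simp only [smul_eq_mul]
    ring
  -- sums
  have hsumL : ∀ a b c : ℝ, (∑ i, ∑ j, (a • (1 : Matrix V V ℝ) + b • A + c • J) i j)
      = (a + b*(p*m) + c*v) * v := by
    intro a b c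
    rw [sum_eq_trace_mul_J, ← hJdef]
    have hmul : (a • (1 : Matrix V V ℝ) + b • A + c • J) * J = (a + b*(p*m) + c*v) • J := by
      simp only [add_mul, smul_mul_assoc, one_mul, hAJ, hJ2, smul_smul]
      module
    rw [hmul, Matrix.trace_smul, htrJ, smul_eq_mul]
  -- entries
  have hentry : ∀ (a b c : ℝ) (i j : V), (a • (1 : Matrix V V ℝ) + b • A + c • J) i j
      = a * (if i = j then 1 else 0) + b * (if G.Adj i j then 1 else 0) + c := by
    intro a b c i j
    simp only [hAdef, hJdef, Matrix.add_apply, Matrix.smul_apply, Matrix.one_apply,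
      SimpleGraph.adjMatrix_apply, Jmat_apply, smul_eq_mul, mul_one]
  -- complement adjacency matrix
  have hcompl : (Gᶜ.adjMatrix ℝ) = J - 1 - A := by
    ext i j
    by_cases hij : i = j
    · subst hij
      simp [SimpleGraph.adjMatrix_apply, hJdef, Jmat_apply, Matrix.one_apply,
        Matrix.sub_apply, hAdef]
    · by_cases hadj : G.Adj i j
      · simp [SimpleGraph.adjMatrix_apply, hJdef, Jmat_apply, Matrix.one_apply,
          Matrix.sub_apply, hAdef, hij, hadj, SimpleGraph.compl_adj]
      · simp [SimpleGraph.adjMatrix_apply, hJdef, Jmat_apply, Matrix.one_apply,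
          Matrix.sub_apply, hAdef, hij, hadj, SimpleGraph.compl_adj]
  constructor
  · -- complement graph : theta = (p*t-1)/(p-1)
    have hN2 : ((t+1) • (1 : Matrix V V ℝ) + (1:ℝ) • A + (-((t+1)/(p*t+1))) • J)
        * ((t+1) • (1 : Matrix V V ℝ) + (1:ℝ) • A + (-((t+1)/(p*t+1))) • J)
        = (2*t) • ((t+1) • (1 : Matrix V V ℝ) + (1:ℝ) • A + (-((t+1)/(p*t+1))) • J) := by
      rw [hL]
      match_scalars <;> (try simp only [hmdef, hvdef]) <;> (try field_simp) <;> (try ring1)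
    have hNpsd := psd_of_mul_self (hherm _ _ _) (by positivity : (0:ℝ) < 2*t) hN2
    have hBdecomp : (1/v) • (1 : Matrix V V ℝ) + (1/(v*(t+1))) • A + (0:ℝ) • J
        = (1/(v*(t+1))) • (((t+1)/(p*t+1)) • J
            + ((t+1) • (1 : Matrix V V ℝ) + (1:ℝ) • A + (-((t+1)/(p*t+1))) • J)) := by
      match_scalars <;> (try field_simp) <;> (try ring1)
    have hBpsd : ((1/v) • (1 : Matrix V V ℝ) + (1/(v*(t+1))) • A + (0:ℝ) • J).PosSemidef := by
      rw [hBdecomp]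
      exact psd_smul (by positivity) ((psd_smul (by positivity) Jmat_posSemidef).add hNpsd)
    have hM2 : ((t-1) • (1 : Matrix V V ℝ) + (-1:ℝ) • A + (1 - t*(p-1)/(p*t-1)) • J)
        * ((t-1) • (1 : Matrix V V ℝ) + (-1:ℝ) • A + (1 - t*(p-1)/(p*t-1)) • J)
        = (2*t) • ((t-1) • (1 : Matrix V V ℝ) + (-1:ℝ) • A + (1 - t*(p-1)/(p*t-1)) • J) := by
      rw [hL]
      match_scalars <;> (try simp only [hmdef, hvdef]) <;> (try field_simp) <;> (try ring1)
    have hMpsd := psd_of_mul_self (hherm _ _ _) (by positivity : (0:ℝ) < 2*t) hM2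
    have hTpsd : ((v/(t*(p*t+1))) • ((t-1) • (1 : Matrix V V ℝ) + (-1:ℝ) • A
        + (1 - t*(p-1)/(p*t-1)) • J)).PosSemidef := psd_smul (by positivity) hMpsd
    refine theta_eq Gᶜ (c := v/(t*(p*t+1))) hBpsd ?_ ?_ ?_ hTpsd ?_
    · rw [htrL]; simp only [hmdef, hvdef]; field_simp; ring
    · intro i j hadj
      obtain ⟨hne, hnadj⟩ := (SimpleGraph.compl_adj G i j).mp hadj
      rw [hentry, if_neg hne, if_neg hnadj]
      try ring
    · rw [hsumL]; simp only [hmdef, hvdef]; field_simp; ring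
    · rw [hcompl]
      rw [smul_add, smul_add]
      match_scalars <;> (try simp only [hmdef, hvdef]) <;> (try field_simp) <;> (try ring1)
  · -- G itself : theta = p*t + 1
    have hM2 : ((t-1) • (1 : Matrix V V ℝ) + (-1:ℝ) • A + (1 - t*(p-1)/(p*t-1)) • J)
        * ((t-1) • (1 : Matrix V V ℝ) + (-1:ℝ) • A + (1 - t*(p-1)/(p*t-1)) • J)
        = (2*t) • ((t-1) • (1 : Matrix V V ℝ) + (-1:ℝ) • A + (1 - t*(p-1)/(p*t-1)) • J) := by
      rw [hL]
      match_scalars <;> (try simp only [hmdef, hvdef]) <;> (try field_simp) <;> (try ring1)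
    have hMpsd := psd_of_mul_self (hherm _ _ _) (by positivity : (0:ℝ) < 2*t) hM2
    have hBdecomp : ((t-1)/(v*t)) • (1 : Matrix V V ℝ) + (-(1/(v*t))) • A + (1/(v*t)) • J
        = (1/(v*t)) • ((t*(p-1)/(p*t-1)) • J
            + ((t-1) • (1 : Matrix V V ℝ) + (-1:ℝ) • A + (1 - t*(p-1)/(p*t-1)) • J)) := by
      match_scalars <;> (try field_simp) <;> (try ring1)
    have hBpsd : (((t-1)/(v*t)) • (1 : Matrix V V ℝ) + (-(1/(v*t))) • A + (1/(v*t)) • J).PosSemidef := by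
      rw [hBdecomp]
      exact psd_smul (by positivity) ((psd_smul (by positivity) Jmat_posSemidef).add hMpsd)
    have hT2 : ((p*t+1) • (1 : Matrix V V ℝ) + ((p*t+1)/(t+1)) • A + (-1 : ℝ) • J)
        * ((p*t+1) • (1 : Matrix V V ℝ) + ((p*t+1)/(t+1)) • A + (-1 : ℝ) • J)
        = (2*((p*t+1)/(t+1))*t) • ((p*t+1) • (1 : Matrix V V ℝ) + ((p*t+1)/(t+1)) • A
            + (-1 : ℝ) • J) := by
      rw [hL]
      match_scalars <;> (try simp only [hmdef, hvdef]) <;> (try field_simp) <;> (try ring1)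
    have hTpsd := psd_of_mul_self (hherm _ _ _)
      (by positivity : (0:ℝ) < 2*((p*t+1)/(t+1))*t) hT2
    refine theta_eq G (c := (p*t+1)/(t+1)) hBpsd ?_ ?_ ?_ hTpsd ?_
    · rw [htrL]; simp only [hmdef, hvdef]; field_simp; ring
    · intro i j hadj
      rw [hentry, if_neg hadj.ne, if_pos hadj]
      try ring
    · rw [hsumL]; simp only [hmdef, hvdef]; field_simp; ring
    · rw [hAdef]
      module

end Core
noncomputable def nbhd {V : Type*} [Fintype V] (G : SimpleGraph V) (v : V) : Finset V :=
  Finset.univ.filter fun w => G.Adj v w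

/-- `G` is strongly regular with parameters `(n, d, l, m)`: it has `n` vertices, is
`d`-regular, adjacent vertices have `l` common neighbors, distinct nonadjacent vertices
have `m` common neighbors, and `G` is neither complete nor empty. -/
def IsSRG {V : Type*} [Fintype V] (G : SimpleGraph V) (n d l m : ℕ) : Prop :=
  Fintype.card V = n ∧
  (∀ v, (nbhd G v).card = d) ∧
  (∀ v w, G.Adj v w → (nbhd G v ∩ nbhd G w).card = l) ∧
  (∀ v w, v ≠ w → ¬ G.Adj v w → (nbhd G v ∩ nbhd G w).card = m) ∧
  G ≠ ⊤ ∧ G ≠ ⊥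

set_option maxHeartbeats 1600000 in
theorem stmt4 {V : Type*} [Fintype V] (G : SimpleGraph V) (q n : ℕ)
    (hq : 2 ≤ q) (hn : 2 ≤ n)
    (h : IsSRG G ((q ^ (2 * n) - 1) / (q - 1)) (q * (q ^ (2 * n - 2) - 1) / (q - 1))
      ((q ^ (2 * n - 2) - 1) / (q - 1) - 2) ((q ^ (2 * n - 2) - 1) / (q - 1))) :
    lovaszTheta Gᶜ = ((q : ℝ) ^ n - 1) / ((q : ℝ) - 1) ∧
    lovaszTheta G = (q : ℝ) ^ n + 1 := by
  classical
  obtain ⟨hcardN, hdegN, hlamN, hmuN, -, -⟩ := h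
  have hq1 : 1 ≤ q := by omega
  have hq0 : 0 < q := by omega
  have hpR : (2:ℝ) ≤ (q:ℝ) := by exact_mod_cast hq
  have htR : (2:ℝ) ≤ (q:ℝ)^(n-1) :=
    le_trans hpR (le_self_pow₀ (by linarith) (by omega))
  have hp1 : (0:ℝ) < (q:ℝ) - 1 := by linarith
  have hp1' : (q:ℝ) - 1 ≠ 0 := ne_of_gt hp1
  -- divisibility and ℕ identities
  have hdvd2 : (q - 1) ∣ (q ^ (2*n-2) - 1) := by
    simpa using Nat.sub_dvd_pow_sub_pow q 1 (2*n-2)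
  have hdvdv : (q - 1) ∣ (q ^ (2*n) - 1) := by
    simpa using Nat.sub_dvd_pow_sub_pow q 1 (2*n)
  have hm_mul : ((q ^ (2*n-2) - 1) / (q-1)) * (q-1) = q ^ (2*n-2) - 1 :=
    Nat.div_mul_cancel hdvd2
  have hv_mul : ((q ^ (2*n) - 1) / (q-1)) * (q-1) = q ^ (2*n) - 1 :=
    Nat.div_mul_cancel hdvdv
  have hpow1 : 1 ≤ q ^ (2*n-2) := Nat.one_le_pow _ _ hq0
  have hpow1v : 1 ≤ q ^ (2*n) := Nat.one_le_pow _ _ hq0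
  have hkN : q * (q ^ (2*n-2) - 1) / (q-1) = q * ((q ^ (2*n-2) - 1) / (q-1)) :=
    Nat.mul_div_assoc q hdvd2
  -- exponent facts over ℝ
  have hexp2 : (q:ℝ) ^ (2*n-2) = ((q:ℝ)^(n-1))^2 := by
    rw [← pow_mul]
    congr 1
    omega
  have hexpv : (q:ℝ) ^ (2*n) = (q:ℝ)^2*((q:ℝ)^(n-1))^2 := by
    rw [← pow_mul, ← pow_add]
    congr 1
    omega
  -- casts
  have hmR : (((q ^ (2*n-2) - 1) / (q-1) : ℕ) : ℝ) = (((q:ℝ)^(n-1))^2 - 1)/((q:ℝ)-1) := by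
    rw [eq_div_iff hp1']
    have h2 := congrArg (fun x : ℕ => (x:ℝ)) hm_mul
    simp only [Nat.cast_mul, Nat.cast_sub hq1, Nat.cast_sub hpow1, Nat.cast_pow,
      Nat.cast_one] at h2
    rw [← hexp2]
    exact h2
  have hvR : (((q ^ (2*n) - 1) / (q-1) : ℕ) : ℝ) = ((q:ℝ)^2*((q:ℝ)^(n-1))^2 - 1)/((q:ℝ)-1) := by
    rw [eq_div_iff hp1']
    have h2 := congrArg (fun x : ℕ => (x:ℝ)) hv_mul
    simp only [Nat.cast_mul, Nat.cast_sub hq1, Nat.cast_sub hpow1v, Nat.cast_pow,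
      Nat.cast_one] at h2
    rw [← hexpv]
    exact h2
  have hkR : ((q * (q ^ (2*n-2) - 1) / (q-1) : ℕ) : ℝ)
      = (q:ℝ) * ((((q:ℝ)^(n-1))^2 - 1)/((q:ℝ)-1)) := by
    rw [hkN, Nat.cast_mul, hmR]
  -- 2 ≤ mN
  have hsq : (q+1)*(q-1) = q^2 - 1 := by
    have h1 : 1 ≤ q^2 := Nat.one_le_pow _ _ hq0
    zify [hq1, h1]
    ring
  have hle : q^2 - 1 ≤ q^(2*n-2) - 1 :=
    Nat.sub_le_sub_right (Nat.pow_le_pow_right hq0 (by omega)) 1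
  have hm2 : 2 ≤ (q^(2*n-2) - 1)/(q-1) := by
    have hdd := Nat.div_le_div_right (c := q-1) hle
    rw [← hsq, Nat.mul_div_cancel _ (by omega : 0 < q - 1)] at hdd
    omega
  -- card
  have hcard : (Fintype.card V : ℝ) = ((q:ℝ)^2*((q:ℝ)^(n-1))^2 - 1)/((q:ℝ)-1) := by
    rw [hcardN, hvR]
  -- A * A entries
  have hAA : ∀ i j, (G.adjMatrix ℝ * G.adjMatrix ℝ) i j
      = ((nbhd G i ∩ nbhd G j).card : ℝ) := by
    intro i j
    rw [Matrix.mul_apply]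
    have hterm : ∀ l, (G.adjMatrix ℝ) i l * (G.adjMatrix ℝ) l j
        = if l ∈ nbhd G i ∩ nbhd G j then (1:ℝ) else 0 := by
      intro l
      simp only [SimpleGraph.adjMatrix_apply, nbhd, Finset.mem_inter, Finset.mem_filter,
        Finset.mem_univ, true_and]
      rcases Classical.em (G.Adj i l) with h1 | h1 <;>
        rcases Classical.em (G.Adj j l) with h2 | h2 <;>
          simp [h1, h2, G.adj_comm l j]
    rw [Finset.sum_congr rfl fun l _ => hterm l]
    simp only [Finset.sum_ite_mem, Finset.univ_inter, Finset.sum_const, nsmul_eq_mul, mul_one]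
  -- the three matrix identities
  have hA2 : G.adjMatrix ℝ * G.adjMatrix ℝ =
      ((((q:ℝ)^(n-1))^2 - 1)/((q:ℝ)-1)) • Jmat V + (-2 : ℝ) • G.adjMatrix ℝ
        + (((q:ℝ)^(n-1))^2 - 1) • (1 : Matrix V V ℝ) := by
    ext i j
    rw [hAA i j]
    rcases eq_or_ne i j with rfl | hij
    · rw [Finset.inter_self, hdegN i]
      simp only [Matrix.add_apply, Matrix.smul_apply, Jmat_apply, SimpleGraph.adjMatrix_apply,
        Matrix.one_apply_eq, smul_eq_mul, mul_one, if_neg (G.irrefl), mul_zero]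
      rw [hkR]
      field_simp
      ring
    · by_cases hadj : G.Adj i j
      · rw [hlamN i j hadj, Nat.cast_sub hm2, hmR]
        simp only [Matrix.add_apply, Matrix.smul_apply, Jmat_apply, SimpleGraph.adjMatrix_apply,
          Matrix.one_apply_ne hij, smul_eq_mul, mul_one, if_pos hadj, mul_zero]
        push_cast
        ring
      · rw [hmuN i j hij hadj, hmR]
        simp only [Matrix.add_apply, Matrix.smul_apply, Jmat_apply, SimpleGraph.adjMatrix_apply,
          Matrix.one_apply_ne hij, smul_eq_mul, mul_one, if_neg hadj, mul_zero]
        ring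
  have hAJ : G.adjMatrix ℝ * Jmat V
      = ((q:ℝ) * ((((q:ℝ)^(n-1))^2 - 1)/((q:ℝ)-1))) • Jmat V := by
    ext i j
    rw [Matrix.mul_apply]
    have hterm : ∀ l, (G.adjMatrix ℝ) i l * (Jmat V) l j
        = if l ∈ nbhd G i then (1:ℝ) else 0 := by
      intro l
      simp [SimpleGraph.adjMatrix_apply, Jmat_apply, nbhd]
    rw [Finset.sum_congr rfl fun l _ => hterm l]
    simp only [Finset.sum_ite_mem, Finset.univ_inter, Finset.sum_const, nsmul_eq_mul, mul_one]
    simp only [Matrix.smul_apply, Jmat_apply, smul_eq_mul, mul_one]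
    rw [hdegN i, hkR]
  have hJA : Jmat V * G.adjMatrix ℝ
      = ((q:ℝ) * ((((q:ℝ)^(n-1))^2 - 1)/((q:ℝ)-1))) • Jmat V := by
    have h2 := congrArg Matrix.transpose hAJ
    rwa [Matrix.transpose_mul, Matrix.transpose_smul, SimpleGraph.transpose_adjMatrix,
      Jmat_transpose] at h2
  obtain ⟨hc1, hc2⟩ := theta_core G ((q:ℝ)) ((q:ℝ)^(n-1)) hpR htR hcard hA2 hAJ hJA
  have hqn : (q:ℝ) * (q:ℝ)^(n-1) = (q:ℝ)^n := by
    rw [← pow_succ']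
    congr 1
    omega
  rw [hc1, hc2, hqn]
  exact ⟨rfl, rfl⟩
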